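/- For m ≥ 2 and 1 ≤ r ≤ ℓ ≤ m, the supports of codewords of weight q^{m−r}(q^r−1)/(q−1) in the lifted Simplex code S_{(q,m)}(q|q^ℓ) form a 2-design on the n = (q^m−1)/(q−1) coordinate points. -/

import Mathlib

open Finset

/-- Hamming weight of a vector. -/
noncomputable def wt {ι R : Type*} [Fintype ι] [Zero R] (c : ι → R) : ℕ :=
  Set.ncard {j | c j ≠ 0}

/-- The lifted code `C(q|q^ℓ)`: the `E`-span of (the image in `E^n` of) a code `C ⊆ F^n`. -/
noncomputable def liftCode (F : Type*) {ι : Type*} (E : Type*) [Field F] [Field E] [Algebra F E]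
    (C : Submodule F (ι → F)) : Submodule E (ι → E) :=
  Submodule.span E ((fun c : ι → F => fun j => algebraMap F E (c j)) '' (C : Set (ι → F)))

/-- `A_i(C)`: the number of codewords of Hamming weight `i`. -/
noncomputable def numWt {ι R : Type*} [Fintype ι] [Semiring R] (C : Submodule R (ι → R)) (i : ℕ) : ℕ :=
  Set.ncard {c : ι → R | c ∈ C ∧ wt c = i}

/-- The set of supports of weight-`i` codewords of `C` (without repetition). -/
def codeSupports {ι R : Type*} [Fintype ι] [Semiring R] (C : Submodule R (ι → R)) (i : ℕ) :
    Set (Set ι) :=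
  {s | ∃ c, c ∈ C ∧ wt c = i ∧ s = {j | c j ≠ 0}}

/-- `C` has minimum Hamming distance `d`. -/
def IsMinDist {ι R : Type*} [Fintype ι] [Semiring R] (C : Submodule R (ι → R)) (d : ℕ) : Prop :=
  (∃ c, c ∈ C ∧ c ≠ 0 ∧ wt c = d) ∧ ∀ c, c ∈ C → c ≠ 0 → d ≤ wt c

/-- The dual code under the standard bilinear form. -/
def dualCode {ι R : Type*} [Fintype ι] [CommRing R] (C : Submodule R (ι → R)) :
    Submodule R (ι → R) where
  carrier := {x | ∀ c ∈ C, ∑ j, x j * c j = 0}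
  add_mem' := by
    intro a b ha hb c hc
    simp only [Set.mem_setOf_eq] at *
    simp [Pi.add_apply, add_mul, Finset.sum_add_distrib, ha c hc, hb c hc]
  zero_mem' := by intro c hc; simp
  smul_mem' := by
    intro a x hx c hc
    simp only [Set.mem_setOf_eq] at *
    simp [Pi.smul_apply, smul_eq_mul, mul_assoc, ← Finset.mul_sum, hx c hc]

/-- Evaluation of multivariate polynomials over `GF(2)` as a linear map. -/
noncomputable def evalLM (m : ℕ) :
    MvPolynomial (Fin m) (ZMod 2) →ₗ[ZMod 2] ((Fin m → ZMod 2) → ZMod 2) where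
  toFun := fun p x => MvPolynomial.eval x p
  map_add' := by intro p q; funext x; simp
  map_smul' := by intro a p; funext x; simp

/-- The binary Reed-Muller code `RM₂(r,m)`: evaluations of polynomials of total degree `≤ r`. -/
noncomputable def RM (r m : ℕ) : Submodule (ZMod 2) ((Fin m → ZMod 2) → ZMod 2) :=
  Submodule.map (evalLM m) (MvPolynomial.restrictTotalDegree (Fin m) (ZMod 2) r)

section Aux
variable {F : Type*} [Field F] [Fintype F] {m n : ℕ}
variable (g : Fin n → (Fin m → F))

/-- Counting projective points inside a subspace. -/
lemma aux_count (hg0 : ∀ i, g i ≠ 0)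
    (hg : ∀ v : Fin m → F, v ≠ 0 → ∃! i : Fin n, ∃ a : F, v = a • g i)
    (K : Submodule F (Fin m → F)) :
    (Fintype.card F - 1) * Set.ncard {j : Fin n | g j ∈ K} + 1
      = Fintype.card F ^ (Module.finrank F K) := by
  classical
  by_cases hn : Nonempty (Fin n)
  case neg =>
    haveI : IsEmpty (Fin n) := not_nonempty_iff.mp hn
    have hK : K = ⊥ := by
      ext x
      simp only [Submodule.mem_bot]
      constructor
      · intro hx
        by_contra h0
        obtain ⟨i, -, -⟩ := hg x h0
        exact hn ⟨i⟩
      · rintro rfl; exact K.zero_mem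
    have h2 : {j : Fin n | g j ∈ K} = ∅ := Set.eq_empty_of_isEmpty _
    rw [h2, hK, Set.ncard_empty, finrank_bot]
    simp
  case pos =>
    haveI : Inhabited (Fin n) := Classical.inhabited_of_nonempty hn
    have hcard : Fintype.card K = Fintype.card F ^ (Module.finrank F K) := Module.card_eq_pow_finrank
    have hnc : Set.ncard {j : Fin n | g j ∈ K} = (univ.filter (fun j => g j ∈ K)).card := by
      rw [Set.ncard_eq_toFinset_card']
      congr 1
      ext j; simp
    set s : Finset (Fin m → F) := univ.filter (fun x => x ∈ K ∧ x ≠ 0) with hs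
    have h1 : Fintype.card K = s.card + 1 := by
      rw [Fintype.card_subtype]
      have : (univ.filter (fun x => x ∈ K)) = insert (0 : Fin m → F) s := by
        ext x; simp only [hs, mem_filter, mem_univ, true_and, mem_insert]
        constructor
        · intro hx
          by_cases h0 : x = 0
          · exact Or.inl h0
          · exact Or.inr ⟨hx, h0⟩
        · rintro (rfl | ⟨hx, _⟩)
          · exact K.zero_mem
          · exact hx
      rw [this, Finset.card_insert_of_notMem (by simp [hs])]
    set f : (Fin m → F) → Fin n :=
      fun x => if h : x ≠ 0 then (hg x h).choose else default with hf
    have hchoose : ∀ (x : Fin m → F) (h : x ≠ 0), (∃ a : F, x = a • g ((hg x h).choose)) ∧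
        ∀ i : Fin n, (∃ a : F, x = a • g i) → i = (hg x h).choose := by
      intro x h
      exact ⟨(hg x h).choose_spec.1, fun i hi => (hg x h).choose_spec.2 i hi⟩
    have key : s.card = ∑ j ∈ univ.filter (fun j => g j ∈ K), (Fintype.card F - 1) := by
      rw [Finset.card_eq_sum_card_fiberwise (f := f) (t := univ.filter (fun j => g j ∈ K))]
      · apply Finset.sum_congr rfl
        intro j hj
        simp only [mem_filter, mem_univ, true_and] at hj
        have himg : s.filter (fun x => f x = j)
            = Finset.image (fun a : Fˣ => (a : F) • g j) univ := by
          ext x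
          simp only [mem_filter, mem_image, mem_univ, true_and, hs]
          constructor
          · rintro ⟨⟨hxK, hx0⟩, hfx⟩
            rw [hf] at hfx
            simp only [hx0, dif_pos, ne_eq, not_false_iff] at hfx
            obtain ⟨⟨a, ha⟩, -⟩ := hchoose x hx0
            rw [hfx] at ha
            have ha0 : a ≠ 0 := by rintro rfl; simp at ha; exact hx0 ha
            exact ⟨Units.mk0 a ha0, ha.symm⟩
          · rintro ⟨a, rfl⟩
            have hx0 : (a : F) • g j ≠ 0 := by
              simp [smul_eq_zero, Units.ne_zero a, hg0 j]
            refine ⟨⟨K.smul_mem _ hj, hx0⟩, ?_⟩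
            rw [hf]
            simp only [hx0, dif_pos, ne_eq, not_false_iff]
            exact ((hchoose _ hx0).2 j ⟨a, rfl⟩).symm
        rw [himg, Finset.card_image_of_injective _ ?_, Finset.card_univ, Fintype.card_units]
        intro a b hab
        simp only at hab
        have h3 : ((a : F) - b) • g j = 0 := by
          rw [sub_smul, hab, sub_self]
        have h4 := (smul_eq_zero.mp h3).resolve_right (hg0 j)
        exact Units.ext (sub_eq_zero.mp h4)
      · intro x hx
        simp only [hs, Finset.mem_coe, mem_filter, mem_univ, true_and] at hx ⊢
        obtain ⟨hxK, hx0⟩ := hx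
        rw [hf]
        simp only [hx0, dif_pos, ne_eq, not_false_iff]
        obtain ⟨⟨a, ha⟩, -⟩ := hchoose x hx0
        have ha0 : a ≠ 0 := by rintro rfl; simp at ha; exact hx0 ha
        have hmem := K.smul_mem a⁻¹ hxK
        rw [ha, smul_smul, inv_mul_cancel₀ ha0, one_smul] at hmem
        exact hmem
    rw [hnc, mul_comm]
    rw [key, Finset.sum_const, smul_eq_mul, hcard] at h1
    exact h1.symm

end Aux

section Aux2
variable {F : Type*} [Field F] [Fintype F] {m n : ℕ}
variable (g : Fin n → (Fin m → F))

example {E : Type*} [Field E] [Algebra F E] [Fintype E] : Module.Finite F E := inferInstance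

lemma aux_le_of_points
    (hg : ∀ v : Fin m → F, v ≠ 0 → ∃! i : Fin n, ∃ a : F, v = a • g i)
    {K1 K2 : Submodule F (Fin m → F)}
    (h : ∀ j, g j ∈ K1 → g j ∈ K2) : K1 ≤ K2 := by
  intro x hx
  by_cases hx0 : x = 0
  · rw [hx0]; exact K2.zero_mem
  · obtain ⟨i, ⟨a, ha⟩, -⟩ := hg x hx0
    have ha0 : a ≠ 0 := by rintro rfl; simp at ha; exact hx0 ha
    have hmem := K1.smul_mem a⁻¹ hx
    rw [ha, smul_smul, inv_mul_cancel₀ ha0, one_smul] at hmem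
    rw [ha]
    exact K2.smul_mem _ (h i hmem)

lemma aux_g_ne
    (hg0 : ∀ i, g i ≠ 0)
    (hg : ∀ v : Fin m → F, v ≠ 0 → ∃! i : Fin n, ∃ a : F, v = a • g i)
    {j1 j2 : Fin n} (hne : j1 ≠ j2) : ∀ a : F, a • g j1 ≠ g j2 := by
  intro a h
  obtain ⟨i, -, huniq⟩ := hg (g j2) (hg0 j2)
  have e1 : j2 = i := huniq j2 ⟨1, (one_smul _ _).symm⟩
  have e2 : j1 = i := huniq j1 ⟨a, h.symm⟩
  exact hne (e2.trans e1.symm)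

lemma aux_pair_li
    (hg0 : ∀ i, g i ≠ 0)
    (hg : ∀ v : Fin m → F, v ≠ 0 → ∃! i : Fin n, ∃ a : F, v = a • g i)
    {j1 j2 : Fin n} (hne : j1 ≠ j2) :
    LinearIndependent F ((↑) : ({g j1, g j2} : Set (Fin m → F)) → (Fin m → F)) := by
  have hli : LinearIndependent F ![g j1, g j2] :=
    (LinearIndependent.pair_iff' (hg0 j1)).mpr (aux_g_ne g hg0 hg hne)
  have hset : ({g j1, g j2} : Set (Fin m → F)) = Set.range ![g j1, g j2] := by
    simp only [Matrix.range_cons, Matrix.range_empty, Set.union_empty, Set.union_singleton]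
    exact Set.pair_comm _ _
  rw [hset]
  exact hli.linearIndepOn_id

lemma aux_equiv_pair {α β : Type*} [DecidableEq α] [DecidableEq β] [Fintype α] [Fintype β]
    (h : Fintype.card α = Fintype.card β)
    {a1 a2 : α} {b1 b2 : β} (ha : a1 ≠ a2) (hb : b1 ≠ b2) :
    ∃ e : α ≃ β, e a1 = b1 ∧ e a2 = b2 := by
  obtain e := Fintype.equivOfCardEq h
  let e1 : α ≃ β := e.trans (Equiv.swap (e a1) b1)
  have h1 : e1 a1 = b1 := by simp [e1]
  have h2 : e1 a2 ≠ b1 := by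
    rw [← h1]; exact fun hc => ha (e1.injective hc).symm
  refine ⟨e1.trans (Equiv.swap (e1 a2) b2), ?_, ?_⟩
  · simp only [Equiv.trans_apply, h1]
    exact Equiv.swap_apply_of_ne_of_ne (fun hc => h2 hc.symm) hb
  · simp [Equiv.swap_apply_left]
end Aux2

section Aux3
variable {F E : Type*} [Field F] [Fintype F] [Field E] [Algebra F E] {m n : ℕ}

/-- The `F`-linear functional `x ↦ ∑ i, v i * φ (x i)` on `F^m` with values in `E`. -/
noncomputable def auxFE (F : Type*) [Field F] [Field E] [Algebra F E] {m : ℕ} (v : Fin m → E) :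
    (Fin m → F) →ₗ[F] E where
  toFun x := ∑ i, v i * algebraMap F E (x i)
  map_add' x y := by
    simp only [Pi.add_apply, map_add, mul_add]
    rw [Finset.sum_add_distrib]
  map_smul' a x := by
    simp only [Pi.smul_apply, smul_eq_mul, map_mul, RingHom.id_apply, Algebra.smul_def,
      Finset.mul_sum]
    apply Finset.sum_congr rfl
    intro i _
    ring

lemma auxFE_of_linearMap (f : (Fin m → F) →ₗ[F] E) :
    auxFE F (fun i => f (Pi.single i 1)) = f := by
  apply LinearMap.ext
  intro x
  simp only [auxFE, LinearMap.coe_mk, AddHom.coe_mk]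
  have hx : x = ∑ i, Pi.single i (x i) := (Finset.univ_sum_single x).symm
  conv_rhs => rw [hx]
  rw [map_sum]
  apply Finset.sum_congr rfl
  intro i _
  have h1 : Pi.single i (x i) = x i • (Pi.single i 1 : Fin m → F) := by
    rw [← Pi.single_smul, smul_eq_mul, mul_one]
  rw [h1, map_smul, Algebra.smul_def]
  ring

lemma aux_mem_span (g : Fin n → (Fin m → F)) (c : Fin n → E) :
    c ∈ Submodule.span E
        (Set.range fun i : Fin m => fun j : Fin n => algebraMap F E (g j i)) ↔
      ∃ v : Fin m → E, ∀ j, c j = auxFE F v (g j) := by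
  rw [Submodule.mem_span_range_iff_exists_fun]
  constructor
  · rintro ⟨v, hv⟩
    refine ⟨v, fun j => ?_⟩
    rw [← hv]
    simp [auxFE, Finset.sum_apply]
  · rintro ⟨v, hv⟩
    refine ⟨v, ?_⟩
    funext j
    rw [hv j]
    simp [auxFE, Finset.sum_apply]

end Aux3

section Aux4
variable {F : Type*} [Field F] [Fintype F] {m n : ℕ}
variable (g : Fin n → (Fin m → F))

lemma aux_sigma
    (hg0 : ∀ i, g i ≠ 0)
    (hg : ∀ v : Fin m → F, v ≠ 0 → ∃! i : Fin n, ∃ a : F, v = a • g i)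
    {j1 j2 k1 k2 : Fin n} (hj : j1 ≠ j2) (hk : k1 ≠ k2) :
    ∃ σ : (Fin m → F) ≃ₗ[F] (Fin m → F), σ (g j1) = g k1 ∧ σ (g j2) = g k2 := by
  classical
  have li1 : LinearIndepOn F id ({g j1, g j2} : Set (Fin m → F)) := aux_pair_li g hg0 hg hj
  have li2 : LinearIndepOn F id ({g k1, g k2} : Set (Fin m → F)) := aux_pair_li g hg0 hg hk
  let t1 := li1.extend (Set.subset_univ _)
  let t2 := li2.extend (Set.subset_univ _)
  let b1 : Module.Basis t1 F (Fin m → F) := Module.Basis.extend li1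
  let b2 : Module.Basis t2 F (Fin m → F) := Module.Basis.extend li2
  haveI : Fintype t1 := FiniteDimensional.fintypeBasisIndex b1
  haveI : Fintype t2 := FiniteDimensional.fintypeBasisIndex b2
  have hcard : Fintype.card t1 = Fintype.card t2 := by
    rw [← Module.finrank_eq_card_basis b1, ← Module.finrank_eq_card_basis b2]
  have hne1 : g j1 ≠ g j2 := by
    intro h
    exact (aux_g_ne g hg0 hg hj) 1 (by rw [one_smul, h])
  have hne2 : g k1 ≠ g k2 := by
    intro h
    exact (aux_g_ne g hg0 hg hk) 1 (by rw [one_smul, h])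
  have m11 : g j1 ∈ t1 := li1.subset_extend _ (Set.mem_insert _ _)
  have m12 : g j2 ∈ t1 := li1.subset_extend _ (Set.mem_insert_of_mem _ rfl)
  have m21 : g k1 ∈ t2 := li2.subset_extend _ (Set.mem_insert _ _)
  have m22 : g k2 ∈ t2 := li2.subset_extend _ (Set.mem_insert_of_mem _ rfl)
  obtain ⟨e, he1, he2⟩ := aux_equiv_pair hcard
    (a1 := ⟨g j1, m11⟩) (a2 := ⟨g j2, m12⟩) (b1 := ⟨g k1, m21⟩) (b2 := ⟨g k2, m22⟩)
    (by simp [Subtype.ext_iff, hne1]) (by simp [Subtype.ext_iff, hne2])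
  refine ⟨b1.equiv b2 e, ?_, ?_⟩
  · have h1 : b1 ⟨g j1, m11⟩ = g j1 := Module.Basis.extend_apply_self _ _
    have h2 : b2 ⟨g k1, m21⟩ = g k1 := Module.Basis.extend_apply_self _ _
    rw [← h1, Module.Basis.equiv_apply, he1, h2]
  · have h1 : b1 ⟨g j2, m12⟩ = g j2 := Module.Basis.extend_apply_self _ _
    have h2 : b2 ⟨g k2, m22⟩ = g k2 := Module.Basis.extend_apply_self _ _
    rw [← h1, Module.Basis.equiv_apply, he2, h2]

lemma aux_pos {r : ℕ}
    (hg0 : ∀ i, g i ≠ 0)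
    (hg : ∀ v : Fin m → F, v ≠ 0 → ∃! i : Fin n, ∃ a : F, v = a • g i)
    (hm : 2 ≤ m) (hr1 : 1 ≤ r) (hrm : r ≤ m)
    {j1 j2 : Fin n} (hj : j1 ≠ j2) :
    ∃ K : Submodule F (Fin m → F), Module.finrank F K = m - r ∧ g j1 ∉ K ∧ g j2 ∉ K := by
  classical
  have li1 : LinearIndepOn F id ({g j1, g j2} : Set (Fin m → F)) := aux_pair_li g hg0 hg hj
  let t1 := li1.extend (Set.subset_univ _)
  let b1 : Module.Basis t1 F (Fin m → F) := Module.Basis.extend li1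
  haveI : Fintype t1 := FiniteDimensional.fintypeBasisIndex b1
  have hcard : Fintype.card t1 = Fintype.card (Fin m) := by
    rw [← Module.finrank_eq_card_basis b1, Fintype.card_fin, Module.finrank_fin_fun]
  have hne1 : g j1 ≠ g j2 := by
    intro h
    exact (aux_g_ne g hg0 hg hj) 1 (by rw [one_smul, h])
  have m11 : g j1 ∈ t1 := li1.subset_extend _ (Set.mem_insert _ _)
  have m12 : g j2 ∈ t1 := li1.subset_extend _ (Set.mem_insert_of_mem _ rfl)
  obtain ⟨e, he1, he2⟩ := aux_equiv_pair hcard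
    (a1 := ⟨g j1, m11⟩) (a2 := ⟨g j2, m12⟩) (b1 := (⟨0, by omega⟩ : Fin m))
    (b2 := (⟨1, by omega⟩ : Fin m)) (by simp [Subtype.ext_iff, hne1]) (by simp [Fin.ext_iff])
  let b' : Module.Basis (Fin m) F (Fin m → F) := b1.reindex e
  have hr0 : 0 < r := hr1
  let τ : Fin m → (Fin r → F) := fun k => Pi.single (⟨k.val % r, Nat.mod_lt _ hr0⟩ : Fin r) 1
  let ψ : (Fin m → F) →ₗ[F] (Fin r → F) := b'.constr F τ
  have hψb : ∀ i : Fin m, ψ (b' i) = τ i := fun i => b'.constr_basis F τ i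
  have hrange : LinearMap.range ψ = ⊤ := by
    rw [Module.Basis.constr_range]
    rw [eq_top_iff]
    intro x _
    have hx : x = ∑ i : Fin r, Pi.single i (x i) := (Finset.univ_sum_single x).symm
    rw [hx]
    apply Submodule.sum_mem
    intro i _
    have h1 : Pi.single i (x i) = x i • (Pi.single i 1 : Fin r → F) := by
      rw [← Pi.single_smul, smul_eq_mul, mul_one]
    rw [h1]
    apply Submodule.smul_mem
    apply Submodule.subset_span
    refine ⟨(⟨i.val, lt_of_lt_of_le i.2 hrm⟩ : Fin m), ?_⟩
    have hidx : (⟨((⟨i.val, lt_of_lt_of_le i.2 hrm⟩ : Fin m) : ℕ) % r, Nat.mod_lt _ hr0⟩ : Fin r) = i := by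
      ext
      simp [Nat.mod_eq_of_lt i.2]
    simp only [τ]
    rw [hidx]
  have hker : Module.finrank F (LinearMap.ker ψ) = m - r := by
    have := LinearMap.finrank_range_add_finrank_ker ψ
    rw [hrange, finrank_top, Module.finrank_fin_fun, Module.finrank_fin_fun] at this
    omega
  refine ⟨LinearMap.ker ψ, hker, ?_, ?_⟩
  · have hb : b' (⟨0, by omega⟩ : Fin m) = g j1 := by
      simp only [b', Module.Basis.reindex_apply]
      rw [← he1, Equiv.symm_apply_apply]
      exact Module.Basis.extend_apply_self _ _
    rw [← hb]
    intro hmem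
    rw [LinearMap.mem_ker, hψb] at hmem
    have := congrFun hmem (⟨0 % r, Nat.mod_lt _ hr0⟩ : Fin r)
    simp [τ, Pi.single_apply] at this
  · have hb : b' (⟨1, by omega⟩ : Fin m) = g j2 := by
      simp only [b', Module.Basis.reindex_apply]
      rw [← he2, Equiv.symm_apply_apply]
      exact Module.Basis.extend_apply_self _ _
    rw [← hb]
    intro hmem
    rw [LinearMap.mem_ker, hψb] at hmem
    have := congrFun hmem (⟨1 % r, Nat.mod_lt _ hr0⟩ : Fin r)
    simp [τ, Pi.single_apply] at this

end Aux4

lemma aux_arith {q M r : ℕ} (hq : 2 ≤ q) (hr1 : 1 ≤ r) (hrm : r ≤ M) :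
    (q - 1) * (q ^ (M - r) * ((q ^ r - 1) / (q - 1))) + q ^ (M - r) = q ^ M := by
  have hdvd : (q - 1) ∣ (q ^ r - 1) := by
    simpa using Nat.sub_dvd_pow_sub_pow q 1 r
  have h1 : (q - 1) * (q ^ (M - r) * ((q ^ r - 1) / (q - 1)))
      = q ^ (M - r) * (q ^ r - 1) := by
    rw [mul_comm (q-1), mul_assoc, Nat.div_mul_cancel hdvd]
  have h2 : q ^ (M - r) * q ^ r = q ^ M := by rw [← pow_add, Nat.sub_add_cancel hrm]
  have h4 : q ^ (M - r) ≤ q ^ M := Nat.pow_le_pow_right (by omega) (by omega)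
  rw [h1, Nat.mul_sub, mul_one, h2]
  omega

section Aux5
variable {F E : Type*} [Field F] [Fintype F] [Field E] [Algebra F E] [Fintype E] {m n ℓ r : ℕ}

lemma aux_finrank_E (hE : Fintype.card E = Fintype.card F ^ ℓ) : Module.finrank F E = ℓ := by
  have h1 : Fintype.card E = Fintype.card F ^ Module.finrank F E := Module.card_eq_pow_finrank
  have hq : 2 ≤ Fintype.card F := Fintype.one_lt_card
  exact Nat.pow_right_injective hq (h1.symm.trans hE)

lemma aux_exists_v (hE : Fintype.card E = Fintype.card F ^ ℓ)
    (hr1 : 1 ≤ r) (hrl : r ≤ ℓ) (hrm : r ≤ m)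
    (K : Submodule F (Fin m → F)) (hK : Module.finrank F K = m - r) :
    ∃ v : Fin m → E, LinearMap.ker (auxFE F v) = K := by
  classical
  have hquot : Module.finrank F ((Fin m → F) ⧸ K) = r := by
    have h := K.finrank_quotient_add_finrank
    rw [hK, Module.finrank_fin_fun] at h
    omega
  set d := Module.finrank F ((Fin m → F) ⧸ K) with hd
  have hd1 : 1 ≤ d := by omega
  have hdl : d ≤ ℓ := by omega
  let bQ : Module.Basis (Fin d) F ((Fin m → F) ⧸ K) := Module.finBasis F _
  let bE : Module.Basis (Fin ℓ) F E := (Module.finBasis F E).reindex (finCongr (aux_finrank_E hE))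
  let σ : Fin ℓ → Fin d := fun i => if h : (i : ℕ) < d then ⟨i, h⟩ else ⟨0, by omega⟩
  have hσ : Function.Surjective σ := by
    intro k
    refine ⟨⟨k.val, lt_of_lt_of_le k.2 hdl⟩, ?_⟩
    simp only [σ, k.2, dif_pos]
  let f0 : ((Fin m → F) ⧸ K) →ₗ[F] E :=
    bE.equivFun.symm.toLinearMap ∘ₗ (LinearMap.funLeft F F σ) ∘ₗ bQ.equivFun.toLinearMap
  have hinj : Function.Injective f0 := by
    simp only [f0, LinearMap.coe_comp, LinearEquiv.coe_coe]
    exact (bE.equivFun.symm.injective.comp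
      ((LinearMap.funLeft_injective_of_surjective F F σ hσ).comp bQ.equivFun.injective))
  let f : (Fin m → F) →ₗ[F] E := f0 ∘ₗ K.mkQ
  have hker : LinearMap.ker f = K := by
    rw [show f = f0 ∘ₗ K.mkQ from rfl, LinearMap.ker_comp,
      LinearMap.ker_eq_bot.mpr hinj, Submodule.comap_bot, Submodule.ker_mkQ]
  refine ⟨fun i => f (Pi.single i 1), ?_⟩
  rw [auxFE_of_linearMap f, hker]

lemma aux_wt_iff (g : Fin n → (Fin m → F))
    (hg0 : ∀ i, g i ≠ 0)
    (hg : ∀ v : Fin m → F, v ≠ 0 → ∃! i : Fin n, ∃ a : F, v = a • g i)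
    (hr1 : 1 ≤ r) (hrm : r ≤ m) (v : Fin m → E) :
    wt (fun j => auxFE F v (g j))
        = Fintype.card F ^ (m - r) * ((Fintype.card F ^ r - 1) / (Fintype.card F - 1))
      ↔ Module.finrank F (LinearMap.ker (auxFE F v)) = m - r := by
  classical
  set q := Fintype.card F with hqdef
  have hq : 2 ≤ q := Fintype.one_lt_card
  set K := LinearMap.ker (auxFE F v) with hK
  set dK := Module.finrank F K with hdK
  have hdKm : dK ≤ m := by
    have := Submodule.finrank_le K
    rwa [Module.finrank_fin_fun] at this
  have hsupp : {j : Fin n | (fun j => auxFE F v (g j)) j ≠ 0} = {j : Fin n | g j ∈ K}ᶜ := by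
    ext j
    simp [K, LinearMap.mem_ker]
  have hwt : wt (fun j => auxFE F v (g j)) = ({j : Fin n | g j ∈ K}ᶜ).ncard := by
    rw [wt, hsupp]
  have hC : ({j : Fin n | g j ∈ K}).ncard + ({j : Fin n | g j ∈ K}ᶜ).ncard = n := by
    rw [Set.ncard_add_ncard_compl, Nat.card_eq_fintype_card, Fintype.card_fin]
  have hA := aux_count g hg0 hg K
  have hB := aux_count g hg0 hg (⊤ : Submodule F (Fin m → F))
  have htop : {j : Fin n | g j ∈ (⊤ : Submodule F (Fin m → F))} = Set.univ := by
    ext j; simp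
  rw [htop, Set.ncard_univ, Nat.card_eq_fintype_card, Fintype.card_fin, finrank_top,
    Module.finrank_fin_fun] at hB
  have hE1 : (q - 1) * wt (fun j => auxFE F v (g j)) + q ^ dK = q ^ m := by
    have hD : (q - 1) * ({j : Fin n | g j ∈ K}).ncard
        + (q - 1) * ({j : Fin n | g j ∈ K}ᶜ).ncard = (q - 1) * n := by
      rw [← mul_add, hC]
    rw [hwt]
    linarith [hA, hB, hD]
  have hE2 := aux_arith (M := m) hq hr1 hrm
  constructor
  · intro hw
    rw [hw] at hE1
    have h5 : q ^ dK = q ^ (m - r) := by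
      have := hE1.trans hE2.symm
      exact Nat.add_left_cancel this
    exact Nat.pow_right_injective hq h5
  · intro hd
    rw [hd] at hE1
    have h5 : (q - 1) * wt (fun j => auxFE F v (g j))
        = (q - 1) * (q ^ (m - r) * ((q ^ r - 1) / (q - 1))) := by omega
    exact Nat.eq_of_mul_eq_mul_left (by omega) h5

end Aux5

section Aux6
variable {F E : Type*} [Field F] [Fintype F] [Field E] [Algebra F E] [Fintype E] {m n ℓ r : ℕ}

lemma aux_bridge (g : Fin n → (Fin m → F))
    (hg0 : ∀ i, g i ≠ 0)
    (hg : ∀ v : Fin m → F, v ≠ 0 → ∃! i : Fin n, ∃ a : F, v = a • g i)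
    (hE : Fintype.card E = Fintype.card F ^ ℓ)
    (hr1 : 1 ≤ r) (hrl : r ≤ ℓ) (hrm : r ≤ m)
    {j1 j2 : Fin n} (hne : j1 ≠ j2) :
    {s ∈ codeSupports
        (Submodule.span E
          (Set.range fun i : Fin m => fun j : Fin n => algebraMap F E (g j i)))
        (Fintype.card F ^ (m - r) * ((Fintype.card F ^ r - 1) / (Fintype.card F - 1))) |
      ({j1, j2} : Set (Fin n)) ⊆ s}
    = (fun K : Submodule F (Fin m → F) => {j : Fin n | g j ∉ K}) ''
      {K : Submodule F (Fin m → F) | Module.finrank F K = m - r ∧ g j1 ∉ K ∧ g j2 ∉ K} := by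
  ext s
  constructor
  · rintro ⟨⟨c, hc, hwt, rfl⟩, hsub⟩
    obtain ⟨v, hv⟩ := (aux_mem_span g c).mp hc
    have hceq : c = fun j => auxFE F v (g j) := funext hv
    subst hceq
    have hK : Module.finrank F (LinearMap.ker (auxFE F v)) = m - r :=
      (aux_wt_iff g hg0 hg hr1 hrm v).mp hwt
    refine ⟨LinearMap.ker (auxFE F v), ⟨hK, ?_, ?_⟩, ?_⟩
    · have h1 : auxFE F v (g j1) ≠ 0 := hsub (Set.mem_insert _ _)
      simpa [LinearMap.mem_ker] using h1
    · have h2 : auxFE F v (g j2) ≠ 0 := hsub (Set.mem_insert_of_mem _ rfl)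
      simpa [LinearMap.mem_ker] using h2
    · ext j
      simp [LinearMap.mem_ker]
  · rintro ⟨K, ⟨hK, h1, h2⟩, rfl⟩
    obtain ⟨v, hvker⟩ := aux_exists_v hE hr1 hrl hrm K hK
    refine ⟨⟨fun j => auxFE F v (g j), ?_, ?_, ?_⟩, ?_⟩
    · exact (aux_mem_span g _).mpr ⟨v, fun j => rfl⟩
    · exact (aux_wt_iff g hg0 hg hr1 hrm v).mpr (by rw [hvker]; exact hK)
    · ext j
      simp [← hvker, LinearMap.mem_ker]
    · rintro x hx
      rcases hx with rfl | hx
      · exact h1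
      · rcases hx with rfl
        exact h2

end Aux6


/-- for `m ≥ 2` and `1 ≤ r ≤ ℓ ≤ m`, the supports of the codewords of weight
`q^{m-r}(q^r-1)/(q-1)` in the lifted Simplex code form a 2-design on the `n` coordinates. -/
theorem stmt14 {F E : Type*} [Field F] [Field E] [Algebra F E] [Fintype F] [Fintype E]
    {m n ℓ r : ℕ} (hm : 2 ≤ m) (hr1 : 1 ≤ r) (hrl : r ≤ ℓ) (hlm : ℓ ≤ m)
    (hE : Fintype.card E = Fintype.card F ^ ℓ)
    (g : Fin n → (Fin m → F)) (hg0 : ∀ i, g i ≠ 0)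
    (hg : ∀ v : Fin m → F, v ≠ 0 → ∃! i : Fin n, ∃ a : F, v = a • g i)
    (S : Submodule E (Fin n → E))
    (hS : S = Submodule.span E
      (Set.range fun i : Fin m => fun j : Fin n => algebraMap F E (g j i))) :
    ∃ lam : ℕ, 0 < lam ∧ ∀ T : Finset (Fin n), T.card = 2 →
      Set.ncard {s ∈ codeSupports S
          (Fintype.card F ^ (m - r) * ((Fintype.card F ^ r - 1) / (Fintype.card F - 1))) |
        ↑T ⊆ s} = lam := by
  classical
  subst hS
  have hrm : r ≤ m := le_trans hrl hlm
  -- canonical pair of coordinates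
  have h01 : (⟨0, by omega⟩ : Fin m) ≠ ⟨1, by omega⟩ := by simp [Fin.ext_iff]
  set x : Fin m → F := Pi.single ⟨0, by omega⟩ 1 with hxdef
  set y : Fin m → F := Pi.single ⟨1, by omega⟩ 1 with hydef
  have hx0 : x ≠ 0 := by
    intro h
    have := congrFun h ⟨0, by omega⟩
    simp [hxdef, Pi.single_apply] at this
  have hy0 : y ≠ 0 := by
    intro h
    have := congrFun h ⟨1, by omega⟩
    simp [hydef, Pi.single_apply] at this
  obtain ⟨i1, ⟨a1, ha1⟩, -⟩ := hg x hx0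
  obtain ⟨i2, ⟨a2, ha2⟩, -⟩ := hg y hy0
  have hi12 : i1 ≠ i2 := by
    rintro rfl
    have ha10 : a1 ≠ 0 := by rintro rfl; simp at ha1; exact hx0 ha1
    -- y = (a2 * a1⁻¹) • x
    have hyx : y = (a2 * a1⁻¹) • x := by
      rw [ha2, ha1, smul_smul, mul_assoc, inv_mul_cancel₀ ha10, mul_one]
    have h1 := congrFun hyx ⟨1, by omega⟩
    simp only [hydef, hxdef, Pi.smul_apply, smul_eq_mul] at h1
    rw [Pi.single_eq_same, Pi.single_eq_of_ne (Ne.symm h01)] at h1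
    simp at h1
  -- the candidate lambda
  set lam := Set.ncard {K : Submodule F (Fin m → F) |
    Module.finrank F K = m - r ∧ g i1 ∉ K ∧ g i2 ∉ K} with hlam
  have hΦinj : Function.Injective
      (fun K : Submodule F (Fin m → F) => {j : Fin n | g j ∉ K}) := by
    intro K1 K2 h
    simp only at h
    have hiff : ∀ j, g j ∈ K1 ↔ g j ∈ K2 := by
      intro j
      have := Set.ext_iff.mp h j
      simp only [Set.mem_setOf_eq] at this
      tauto
    exact le_antisymm (aux_le_of_points g hg (fun j => (hiff j).mp))
      (aux_le_of_points g hg (fun j => (hiff j).mpr))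
  refine ⟨lam, ?_, ?_⟩
  · obtain ⟨K, hK1, hK2, hK3⟩ := aux_pos g hg0 hg hm hr1 hrm hi12
    rw [hlam]
    exact (Set.ncard_pos (Set.toFinite _)).mpr ⟨K, hK1, hK2, hK3⟩
  · intro T hT
    obtain ⟨j1, j2, hne, rfl⟩ := Finset.card_eq_two.mp hT
    have hTset : (↑({j1, j2} : Finset (Fin n)) : Set (Fin n)) = ({j1, j2} : Set (Fin n)) := by
      simp
    rw [hTset, aux_bridge g hg0 hg hE hr1 hrl hrm hne,
      Set.ncard_image_of_injective _ hΦinj]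
    -- invariance: move the pair (j1, j2) to (i1, i2)
    obtain ⟨σ, hσ1, hσ2⟩ := aux_sigma g hg0 hg hne hi12
    have himg : (fun K : Submodule F (Fin m → F) => Submodule.map σ.toLinearMap K) ''
        {K : Submodule F (Fin m → F) | Module.finrank F K = m - r ∧ g j1 ∉ K ∧ g j2 ∉ K}
        = {K : Submodule F (Fin m → F) | Module.finrank F K = m - r ∧ g i1 ∉ K ∧ g i2 ∉ K} := by
      ext K'
      constructor
      · rintro ⟨K, ⟨hK1, hK2, hK3⟩, rfl⟩
        refine ⟨?_, ?_, ?_⟩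
        · rw [LinearEquiv.finrank_map_eq σ K]
          exact hK1
        · rw [Submodule.mem_map_equiv]
          rw [← hσ1, LinearEquiv.symm_apply_apply]
          exact hK2
        · rw [Submodule.mem_map_equiv]
          rw [← hσ2, LinearEquiv.symm_apply_apply]
          exact hK3
      · rintro ⟨hK1, hK2, hK3⟩
        refine ⟨Submodule.map σ.symm.toLinearMap K', ⟨?_, ?_, ?_⟩, ?_⟩
        · rw [LinearEquiv.finrank_map_eq σ.symm K']
          exact hK1
        · rw [Submodule.mem_map_equiv]
          simpa [hσ1] using hK2
        · rw [Submodule.mem_map_equiv]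
          simpa [hσ2] using hK3
        · ext z
          rw [Submodule.mem_map_equiv, Submodule.mem_map_equiv]
          simp
    rw [hlam, ← himg]
    exact (Set.ncard_image_of_injective _
      (Submodule.map_injective_of_injective σ.injective)).symm
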